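/- Let H < 1/2 and 0 < t ≤ T. There is a constant C (depending on H, T, r) such that for every fixed s ∈ [0,T], every integer r ≥ 1 and every integer n ≥ 2, the sum over j = 0 to ⌊nt⌋ - 1 of |E[ΔB_{j/n} B_s]|^r is at most C n^{-2(r-1)H}. -/

import Mathlib

open MeasureTheory Finset
open scoped NNReal

private lemma my_rpow_subadd {p : ℝ} (hp0 : 0 ≤ p) (hp1 : p ≤ 1) {x y : ℝ}
    (hx : 0 ≤ x) (hy : 0 ≤ y) : (x + y) ^ p ≤ x ^ p + y ^ p := by
  have h := NNReal.rpow_add_le_add_rpow x.toNNReal y.toNNReal hp0 hp1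
  have h2 : (((x.toNNReal + y.toNNReal) ^ p : ℝ≥0) : ℝ)
      ≤ ((x.toNNReal ^ p : ℝ≥0) : ℝ) + ((y.toNNReal ^ p : ℝ≥0) : ℝ) := by exact_mod_cast h
  rw [NNReal.coe_rpow, NNReal.coe_rpow, NNReal.coe_rpow, NNReal.coe_add,
    Real.coe_toNNReal x hx, Real.coe_toNNReal y hy] at h2
  exact h2

private lemma my_abs_rpow_sub_le {p : ℝ} (hp0 : 0 ≤ p) (hp1 : p ≤ 1) (x y : ℝ) :
    |x| ^ p - |y| ^ p ≤ |x - y| ^ p := by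
  have h1 : |x| ≤ |y| + |x - y| := by
    calc |x| = |y + (x - y)| := by ring_nf
    _ ≤ |y| + |x - y| := abs_add_le _ _
  have h2 : |x| ^ p ≤ (|y| + |x - y|) ^ p :=
    Real.rpow_le_rpow (abs_nonneg _) h1 hp0
  have h3 := my_rpow_subadd hp0 hp1 (abs_nonneg y) (abs_nonneg (x - y))
  linarith

private lemma my_abs_abs_rpow_sub {p : ℝ} (hp0 : 0 ≤ p) (hp1 : p ≤ 1) (x y : ℝ) :
    |(|x| ^ p - |y| ^ p)| ≤ |x - y| ^ p := by
  rw [abs_sub_le_iff]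
  refine ⟨my_abs_rpow_sub_le hp0 hp1 x y, ?_⟩
  have := my_abs_rpow_sub_le hp0 hp1 y x
  rwa [abs_sub_comm] at this

set_option maxHeartbeats 1000000 in
/-- Lemma 2.6(a): for fBm with `H < 1/2` and `0 < t ≤ T`, for fixed `r ≥ 1`
there is `C` such that for every `s ∈ [0,T]` and `n ≥ 2`,
`∑_{j=0}^{⌊nt⌋-1} |E[ΔB_{j/n} B_s]|^r ≤ C n^{-2(r-1)H}`. -/
theorem fbm_sum_increment_covariance_power_bound
    {Ω : Type*} [MeasurableSpace Ω] (μ : Measure Ω) [IsProbabilityMeasure μ]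
    (H : ℝ) (hH0 : 0 < H) (hH1 : H < 1/2) (T t : ℝ) (ht : 0 < t) (htT : t ≤ T)
    (B : ℝ → Ω → ℝ)
    (hint : ∀ s u : ℝ, Integrable (fun ω => B s ω * B u ω) μ)
    (hcov : ∀ s u : ℝ, 0 ≤ s → 0 ≤ u →
      ∫ ω, B s ω * B u ω ∂μ = (s ^ (2*H) + u ^ (2*H) - |u - s| ^ (2*H)) / 2)
    (r : ℕ) (hr : 1 ≤ r) :
    ∃ C : ℝ, 0 < C ∧ ∀ s ∈ Set.Icc (0:ℝ) T, ∀ n : ℕ, 2 ≤ n →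
      ∑ j ∈ Finset.range ⌊(n:ℝ)*t⌋₊,
        |∫ ω, (B (((j:ℝ)+1)/n) ω - B ((j:ℝ)/n) ω) * B s ω ∂μ| ^ r
        ≤ C * (n : ℝ) ^ (-(2*((r:ℝ)-1)*H)) := by
  have hT : 0 < T := lt_of_lt_of_le ht htT
  set p : ℝ := 2 * H with hp
  have hp0 : 0 < p := by positivity
  have hp1 : p ≤ 1 := by rw [hp]; linarith
  refine ⟨2 * T ^ p + 1, by positivity, ?_⟩
  rintro s ⟨hs0, hsT⟩ n hn
  have hN : (0:ℝ) < n := by positivity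
  set m : ℕ := ⌊(n:ℝ) * t⌋₊ with hm
  set g : ℕ → ℝ := fun j => ((j:ℝ) / n) ^ p with hg
  set h : ℕ → ℝ := fun j => |s - (j:ℝ) / n| ^ p with hh
  -- the covariance identity
  have key : ∀ j : ℕ,
      ∫ ω, (B (((j:ℝ)+1)/n) ω - B ((j:ℝ)/n) ω) * B s ω ∂μ
        = (g (j+1) - g j + (h j - h (j+1))) / 2 := by
    intro j
    have hj0 : (0:ℝ) ≤ (j:ℝ)/n := by positivity
    have hj10 : (0:ℝ) ≤ ((j:ℝ)+1)/n := by positivity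
    have e1 : ∀ ω, (B (((j:ℝ)+1)/n) ω - B ((j:ℝ)/n) ω) * B s ω
        = B (((j:ℝ)+1)/n) ω * B s ω - B ((j:ℝ)/n) ω * B s ω := fun ω => by ring
    simp only [e1]
    rw [integral_sub (hint _ _) (hint _ _), hcov _ _ hj10 hs0, hcov _ _ hj0 hs0]
    have c1 : ((j+1 : ℕ) : ℝ) / n = ((j:ℝ)+1)/n := by push_cast; ring
    simp only [hg, hh, c1]
    ring
  -- uniform bound on increments
  set D : ℝ := ((n:ℝ)⁻¹) ^ p with hD
  have hD0 : 0 ≤ D := by positivity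
  have hgmono : ∀ j : ℕ, g j ≤ g (j+1) := by
    intro j
    apply Real.rpow_le_rpow (by positivity) _ hp0.le
    gcongr
    push_cast; linarith
  have hgb : ∀ j : ℕ, |g (j+1) - g j| ≤ D := by
    intro j
    have h2 : g (j+1) ≤ g j + D := by
      have e : ((j+1:ℕ):ℝ)/n = (j:ℝ)/n + (n:ℝ)⁻¹ := by push_cast; field_simp
      show (((j+1:ℕ):ℝ)/n) ^ p ≤ ((j:ℝ)/n) ^ p + ((n:ℝ)⁻¹) ^ p
      rw [e]
      exact my_rpow_subadd hp0.le hp1 (by positivity) (by positivity)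
    rw [abs_of_nonneg (by linarith [hgmono j])]
    linarith [hgmono j]
  have hhb : ∀ j : ℕ, |h (j+1) - h j| ≤ D := by
    intro j
    have h0 := my_abs_abs_rpow_sub hp0.le hp1 (s - ((j+1:ℕ):ℝ)/n) (s - (j:ℝ)/n)
    have e : s - ((j+1:ℕ):ℝ)/n - (s - (j:ℝ)/n) = -((n:ℝ)⁻¹) := by
      push_cast; field_simp; ring
    rw [e, abs_neg, abs_of_nonneg (show (0:ℝ) ≤ ((n:ℝ))⁻¹ by positivity)] at h0
    exact h0
  have habs : ∀ j : ℕ,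
      |∫ ω, (B (((j:ℝ)+1)/n) ω - B ((j:ℝ)/n) ω) * B s ω ∂μ| ≤ D := by
    intro j
    rw [key j, abs_div, abs_of_pos (show (0:ℝ) < 2 by norm_num)]
    have h3 : |g (j+1) - g j + (h j - h (j+1))| ≤ 2 * D := by
      calc |g (j+1) - g j + (h j - h (j+1))|
          ≤ |g (j+1) - g j| + |h j - h (j+1)| := abs_add_le _ _
        _ ≤ D + D := by
            rw [abs_sub_comm (h j)]
            exact add_le_add (hgb j) (hhb j)
        _ = 2 * D := by ring
    linarith
  -- sum of |increments of g|
  have hmn : (m:ℝ)/n ≤ t := by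
    rw [div_le_iff₀ hN]
    calc (m:ℝ) ≤ (n:ℝ) * t := Nat.floor_le (by positivity)
    _ = t * n := by ring
  have hg_sum : ∑ j ∈ range m, |g (j+1) - g j| ≤ T ^ p := by
    have e : ∀ j ∈ range m, |g (j+1) - g j| = g (j+1) - g j := by
      intro j _
      exact abs_of_nonneg (by linarith [hgmono j])
    rw [Finset.sum_congr rfl e, Finset.sum_range_sub]
    have hg0 : g 0 = 0 := by simp [hg, Real.zero_rpow (ne_of_gt hp0)]
    rw [hg0, sub_zero]
    exact Real.rpow_le_rpow (by positivity) (le_trans hmn htT) hp0.le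
  -- sum of |increments of h|
  have hh_nonneg : ∀ j, 0 ≤ h j := fun j => by positivity
  have hhT : ∀ j : ℕ, (j:ℝ)/n ≤ t → h j ≤ T ^ p := by
    intro j hj
    apply Real.rpow_le_rpow (abs_nonneg _) _ hp0.le
    rw [abs_sub_le_iff]
    constructor
    · have : (0:ℝ) ≤ (j:ℝ)/n := by positivity
      linarith
    · linarith [le_trans hj htT]
  have hD1 : D ≤ 1 := by
    apply Real.rpow_le_one (by positivity) _ hp0.le
    rw [inv_le_one_iff₀]
    right; exact_mod_cast le_trans (by norm_num) hn
  set K : ℕ := ⌊(n:ℝ) * s⌋₊ with hK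
  set k : ℕ := min m K with hk
  have hkm : k ≤ m := min_le_left _ _
  have hh_sum : ∑ j ∈ range m, |h (j+1) - h j| ≤ 2 * T ^ p + 1 := by
    have hsplit : ∑ j ∈ range k, |h (j+1) - h j| + ∑ j ∈ Ico k m, |h (j+1) - h j|
        = ∑ j ∈ range m, |h (j+1) - h j| :=
      Finset.sum_range_add_sum_Ico _ hkm
    -- decreasing part
    have hA : ∑ j ∈ range k, |h (j+1) - h j| ≤ h 0 := by
      have e : ∀ j ∈ range k, |h (j+1) - h j| = h j - h (j+1) := by
        intro j hj
        have hjk : j + 1 ≤ k := Finset.mem_range.mp hj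
        have hjK : ((j:ℝ)+1) ≤ (n:ℝ) * s := by
          have h1 : ((j+1:ℕ):ℝ) ≤ (K:ℝ) := by
            exact_mod_cast le_trans hjk (min_le_right _ _)
          have h2 : (K:ℝ) ≤ (n:ℝ) * s := Nat.floor_le (by positivity)
          push_cast at h1; linarith
        have hx1 : ((j:ℝ)+1)/n ≤ s := by
          rw [div_le_iff₀ hN]; nlinarith
        have hx0 : (j:ℝ)/n ≤ s := by
          refine le_trans ?_ hx1
          gcongr; linarith
        have hmono : h (j+1) ≤ h j := by
          simp only [hh]
          apply Real.rpow_le_rpow (abs_nonneg _) _ hp0.le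
          have e1 : |s - ((j+1:ℕ):ℝ)/n| = s - ((j:ℝ)+1)/n := by
            rw [abs_of_nonneg (by push_cast; linarith)]; push_cast; ring
          have e2 : |s - (j:ℝ)/n| = s - (j:ℝ)/n := abs_of_nonneg (by linarith)
          rw [e1, e2]
          have : ((j:ℝ))/n ≤ ((j:ℝ)+1)/n := by gcongr; linarith
          linarith
        rw [abs_of_nonpos (by linarith)]; ring
      rw [Finset.sum_congr rfl e, Finset.sum_range_sub']
      linarith [hh_nonneg k]
    -- increasing / middle part
    have hB : ∑ j ∈ Ico k m, |h (j+1) - h j| ≤ 1 + h m := by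
      rcases lt_or_ge k m with hlt | hge
      · have hkK : k = K := by
          rcases le_or_gt K m with h1 | h1
          · simp [hk, min_eq_right h1]
          · exfalso; rw [hk, min_eq_left h1.le] at hlt; exact lt_irrefl _ hlt
        rw [Finset.sum_eq_sum_Ico_succ_bot hlt]
        have hmid : |h (k+1) - h k| ≤ 1 := le_trans (hhb k) hD1
        have htail : ∑ j ∈ Ico (k+1) m, |h (j+1) - h j| ≤ h m := by
          have e : ∀ j ∈ Ico (k+1) m, |h (j+1) - h j| = h (j+1) - h j := by
            intro j hj
            rw [Finset.mem_Ico] at hj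
            have hjK : K + 1 ≤ j := hkK ▸ hj.1
            have h1 : (n:ℝ) * s < (K:ℝ) + 1 := Nat.lt_floor_add_one _
            have h2 : ((K:ℝ)+1) ≤ (j:ℝ) := by exact_mod_cast hjK
            have hx0 : s ≤ (j:ℝ)/n := by
              rw [le_div_iff₀ hN]; nlinarith
            have hx1 : s ≤ ((j:ℝ)+1)/n := by
              refine le_trans hx0 ?_
              gcongr; linarith
            have hmono : h j ≤ h (j+1) := by
              simp only [hh]
              apply Real.rpow_le_rpow (abs_nonneg _) _ hp0.le
              have e1 : |s - ((j+1:ℕ):ℝ)/n| = ((j:ℝ)+1)/n - s := by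
                rw [abs_of_nonpos (by push_cast; linarith)]; push_cast; ring
              have e2 : |s - (j:ℝ)/n| = (j:ℝ)/n - s := by
                rw [abs_of_nonpos (by linarith)]; ring
              rw [e1, e2]
              have : ((j:ℝ))/n ≤ ((j:ℝ)+1)/n := by gcongr; linarith
              linarith
            exact abs_of_nonneg (by linarith)
          rw [Finset.sum_congr rfl e, Finset.sum_Ico_eq_sub _ hlt,
            Finset.sum_range_sub, Finset.sum_range_sub]
          linarith [hh_nonneg (k+1)]
        linarith
      · have hempty : Ico k m = ∅ := Finset.Ico_eq_empty (by omega)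
        rw [hempty, Finset.sum_empty]
        linarith [hh_nonneg m]
    have h0T : h 0 ≤ T ^ p := hhT 0 (by simpa using ht.le)
    have hmT : h m ≤ T ^ p := hhT m hmn
    linarith
  -- total L¹-type bound
  have hS : ∑ j ∈ range m,
      |∫ ω, (B (((j:ℝ)+1)/n) ω - B ((j:ℝ)/n) ω) * B s ω ∂μ| ≤ 2 * T ^ p + 1 := by
    have hle : ∀ j ∈ range m,
        |∫ ω, (B (((j:ℝ)+1)/n) ω - B ((j:ℝ)/n) ω) * B s ω ∂μ|
          ≤ (|g (j+1) - g j| + |h (j+1) - h j|) / 2 := by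
      intro j _
      rw [key j, abs_div, abs_of_pos (show (0:ℝ) < 2 by norm_num)]
      have h1 : |g (j+1) - g j + (h j - h (j+1))| ≤ |g (j+1) - g j| + |h (j+1) - h j| := by
        calc |g (j+1) - g j + (h j - h (j+1))|
            ≤ |g (j+1) - g j| + |h j - h (j+1)| := abs_add_le _ _
        _ = |g (j+1) - g j| + |h (j+1) - h j| := by rw [abs_sub_comm (h j)]
      linarith
    calc ∑ j ∈ range m, |∫ ω, (B (((j:ℝ)+1)/n) ω - B ((j:ℝ)/n) ω) * B s ω ∂μ|
        ≤ ∑ j ∈ range m, (|g (j+1) - g j| + |h (j+1) - h j|) / 2 :=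
          Finset.sum_le_sum hle
      _ = (∑ j ∈ range m, |g (j+1) - g j| + ∑ j ∈ range m, |h (j+1) - h j|) / 2 := by
          rw [← Finset.sum_add_distrib, ← Finset.sum_div]
      _ ≤ (T ^ p + (2 * T ^ p + 1)) / 2 := by gcongr
      _ ≤ 2 * T ^ p + 1 := by
          have : (0:ℝ) ≤ T ^ p := by positivity
          linarith
  -- final estimate
  have hDpow : D ^ (r - 1) = (n:ℝ) ^ (-(2*((r:ℝ)-1)*H)) := by
    rw [hD, ← Real.rpow_natCast (((n:ℝ))⁻¹ ^ p) (r-1), ← Real.rpow_mul (by positivity),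
      Real.inv_rpow hN.le, ← Real.rpow_neg hN.le]
    congr 1
    have hc : ((r - 1 : ℕ) : ℝ) = (r:ℝ) - 1 := by
      have := Nat.cast_sub (R := ℝ) hr; simpa using this
    rw [hc, hp]; ring
  calc ∑ j ∈ range m,
        |∫ ω, (B (((j:ℝ)+1)/n) ω - B ((j:ℝ)/n) ω) * B s ω ∂μ| ^ r
      ≤ ∑ j ∈ range m,
        |∫ ω, (B (((j:ℝ)+1)/n) ω - B ((j:ℝ)/n) ω) * B s ω ∂μ| * D ^ (r-1) := by
        apply Finset.sum_le_sum
        intro j _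
        set a := |∫ ω, (B (((j:ℝ)+1)/n) ω - B ((j:ℝ)/n) ω) * B s ω ∂μ| with ha
        have ha0 : 0 ≤ a := abs_nonneg _
        have hpow : a ^ r = a * a ^ (r - 1) := by
          rw [← pow_succ']
          congr 1
          omega
        rw [hpow]
        exact mul_le_mul_of_nonneg_left (pow_le_pow_left₀ ha0 (habs j) _) ha0
    _ = (∑ j ∈ range m,
        |∫ ω, (B (((j:ℝ)+1)/n) ω - B ((j:ℝ)/n) ω) * B s ω ∂μ|) * D ^ (r-1) := by
        rw [Finset.sum_mul]
    _ ≤ (2 * T ^ p + 1) * D ^ (r-1) :=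
        mul_le_mul_of_nonneg_right hS (by positivity)
    _ = (2 * T ^ p + 1) * (n:ℝ) ^ (-(2*((r:ℝ)-1)*H)) := by rw [hDpow]
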